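/- Let M be a finitely generated primitive monoid. Then the set P of prime elements of M is finite, P generates M as a monoid, and every generating set of M contains P; in particular P is the unique minimal generating set of M. -/

import Mathlib

/-- The algebraic preorder on a commutative monoid: `x ≤ y` iff `∃ z, y = x + z`. -/
def AlgLE {M : Type*} [AddCommMonoid M] (x y : M) : Prop := ∃ z, y = x + z

/-- A monoid is conical if `x + y = 0` implies `x = 0` and `y = 0`. -/
def IsConical (M : Type*) [AddCommMonoid M] : Prop := ∀ x y : M, x + y = 0 → x = 0 ∧ y = 0

/-- A refinement monoid: every equality `a + b = c + d` admits a refinement. -/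
def IsRefinement (M : Type*) [AddCommMonoid M] : Prop :=
  ∀ a b c d : M, a + b = c + d →
    ∃ x y z w : M, a = x + y ∧ b = z + w ∧ c = x + z ∧ d = y + w

/-- Separative: `a + a = a + b` and `b + b = a + b` imply `a = b`. -/
def IsSeparative (M : Type*) [AddCommMonoid M] : Prop :=
  ∀ a b : M, a + a = a + b → b + b = a + b → a = b

/-- A prime element: `p ≠ 0` and `p ≤ a + b` implies `p ≤ a` or `p ≤ b`
(algebraic preorder). -/
def IsPrimeElem {M : Type*} [AddCommMonoid M] (p : M) : Prop :=
  p ≠ 0 ∧ ∀ a b : M, AlgLE p (a + b) → AlgLE p a ∨ AlgLE p b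

/-- Primely generated: every element is a finite sum of prime elements. -/
def PrimelyGenerated (M : Type*) [AddCommMonoid M] : Prop :=
  ∀ x : M, ∃ l : Multiset M, (∀ p ∈ l, IsPrimeElem p) ∧ x = l.sum

/-- Antisymmetric: the algebraic preorder is a partial order. -/
def IsAntisymmetric (M : Type*) [AddCommMonoid M] : Prop :=
  ∀ x y : M, AlgLE x y → AlgLE y x → x = y

/-- A primitive monoid: an antisymmetric, primely generated refinement monoid. -/
def IsPrimitive (M : Type*) [AddCommMonoid M] : Prop :=
  IsAntisymmetric M ∧ PrimelyGenerated M ∧ IsRefinement M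

/-- In a finitely generated primitive monoid, the set of primes is finite, it
generates the monoid, and it is contained in every generating set; hence it is
the unique minimal generating set. -/
theorem statement9 (M : Type*) [AddCommMonoid M] (hprim : IsPrimitive M)
    (hfg : ∃ S : Finset M, AddSubmonoid.closure (S : Set M) = ⊤) :
    {p : M | IsPrimeElem p}.Finite ∧
    AddSubmonoid.closure {p : M | IsPrimeElem p} = ⊤ ∧
    ∀ S : Set M, AddSubmonoid.closure S = ⊤ → {p : M | IsPrimeElem p} ⊆ S := by
  classical
  obtain ⟨hanti, hpg, _⟩ := hprim
  have hms : ∀ (S : Set M) (x : M), x ∈ AddSubmonoid.closure S →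
      ∃ l : Multiset M, (∀ a ∈ l, a ∈ S) ∧ x = l.sum := by
    intro S x hx
    induction hx using AddSubmonoid.closure_induction with
    | mem y hy => exact ⟨{y}, by simpa using hy, by simp⟩
    | zero => exact ⟨0, by simp, by simp⟩
    | add y z _ _ hy hz =>
      obtain ⟨l1, h1, e1⟩ := hy
      obtain ⟨l2, h2, e2⟩ := hz
      exact ⟨l1 + l2, fun a ha => by
        rcases Multiset.mem_add.1 ha with h | h
        · exact h1 a h
        · exact h2 a h, by rw [e1, e2, Multiset.sum_add]⟩
  have key : ∀ S : Set M, AddSubmonoid.closure S = ⊤ → {p : M | IsPrimeElem p} ⊆ S := by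
    intro S hS p hp
    have hmem : p ∈ AddSubmonoid.closure S := by rw [hS]; trivial
    obtain ⟨l, hl, hsum⟩ := hms S p hmem
    have hle : ∀ l : Multiset M, AlgLE p l.sum → ∃ a ∈ l, AlgLE p a := by
      intro l
      induction l using Multiset.induction with
      | empty =>
        intro h
        simp only [Multiset.sum_zero] at h
        exact absurd (hanti p 0 h ⟨p, (zero_add p).symm⟩) hp.1
      | cons a t ih =>
        intro h
        rw [Multiset.sum_cons] at h
        rcases hp.2 a t.sum h with h1 | h2
        · exact ⟨a, Multiset.mem_cons_self a t, h1⟩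
        · obtain ⟨b, hb, hb'⟩ := ih h2
          exact ⟨b, Multiset.mem_cons_of_mem hb, hb'⟩
    obtain ⟨a, ha, hpa⟩ := hle l (hsum ▸ ⟨0, (add_zero p).symm⟩)
    have hap : AlgLE a p :=
      ⟨(l.erase a).sum, by rw [hsum, ← Multiset.sum_cons, Multiset.cons_erase ha]⟩
    exact (hanti p a hpa hap) ▸ hl a ha
  refine ⟨?_, ?_, key⟩
  · obtain ⟨S, hS⟩ := hfg
    exact Set.Finite.subset S.finite_toSet (key _ hS)
  · rw [eq_top_iff]
    intro x _
    obtain ⟨l, hl, rfl⟩ := hpg x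
    exact AddSubmonoid.multiset_sum_mem _ l fun a ha => AddSubmonoid.subset_closure (hl a ha)
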